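/- For every stable matching rule ψ and every market (P, C) with substitutable firm choice functions, and for every individually rational matching μ ∈ I(P,C), there exists a strategy profile (P*, C*) that is a Nash equilibrium of the game (ψ, P, C) with ψ(P*, C*) = μ. Consequently, the game (ψ, P, C) implements the individually rational correspondence in Nash equilibrium. -/

import Mathlib

/-! Common set-up for a many-to-one matching market.  `W` is the (finite) set of
workers and `F` the set of firms.  Each worker `w` has a strict preference over
`F ∪ {∅}`, modelled as a linear order `P w : LinearOrder (Option F)` (where
`none` stands for being unmatched and `L.lt a b` means `b` is strictly
preferred to `a`).  Each firm `f` has a choice function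
`C f : Finset W → Finset W`. -/

/-- A many-to-one matching. -/
structure Matching (W F : Type*) where
  /-- the firm (if any) assigned to each worker -/
  workerOf : W → Option F
  /-- the set of workers assigned to each firm -/
  firmOf : F → Finset W
  /-- `w` works for `f` iff `f` is `w`'s firm -/
  consistent : ∀ w f, w ∈ firmOf f ↔ workerOf w = some f

variable {W F : Type*} [DecidableEq W]

/-- A choice function: `Cf S ⊆ S`, and substitutability. -/
def SubChoice (Cf : Finset W → Finset W) : Prop :=
  (∀ S, Cf S ⊆ S) ∧ ∀ S' S : Finset W, S' ⊆ S → Cf S ∩ S' ⊆ Cf S'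

/-- Consistency of a choice function. -/
def ConsistentChoice (Cf : Finset W → Finset W) : Prop :=
  ∀ S' S : Finset W, Cf S ⊆ S' → S' ⊆ S → Cf S' = Cf S

/-- The law of aggregate demand. -/
def LAD (Cf : Finset W → Finset W) : Prop :=
  ∀ S' S : Finset W, S' ⊆ S → (Cf S').card ≤ (Cf S).card

/-- Individual rationality: no worker prefers being unmatched to her assignment,
and no firm wants to fire any of its workers. -/
def IndRational (P : W → LinearOrder (Option F)) (C : F → Finset W → Finset W)
    (μ : Matching W F) : Prop :=
  (∀ w : W, ¬ (P w).lt (μ.workerOf w) none) ∧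
    ∀ f : F, C f (μ.firmOf f) = μ.firmOf f

/-- Stability: individual rationality plus absence of blocking firm-worker pairs. -/
def Stable (P : W → LinearOrder (Option F)) (C : F → Finset W → Finset W)
    (μ : Matching W F) : Prop :=
  IndRational P C μ ∧
    ¬ ∃ (f : F) (w : W), w ∉ μ.firmOf f ∧ w ∈ C f (insert w (μ.firmOf f)) ∧
      (P w).lt (μ.workerOf w) (some f)

variable [DecidableEq F]

/-- A Nash equilibrium of the game `(ψ, P, C)` in which both workers and firms
play strategically: no worker can obtain a strictly `P_w`-better firm by a
unilateral misreport and no firm can obtain a Blair-`⪰_f`-better (w.r.t. its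
true choice function `C_f`) set of workers by unilaterally misreporting a
substitutable choice function. -/
def NashEq (P : W → LinearOrder (Option F)) (C : F → Finset W → Finset W)
    (ψ : (W → LinearOrder (Option F)) → (F → Finset W → Finset W) → Matching W F)
    (P' : W → LinearOrder (Option F)) (C' : F → Finset W → Finset W) : Prop :=
  (∀ (w : W) (Pw : LinearOrder (Option F)),
      ¬ (P w).lt ((ψ P' C').workerOf w)
        ((ψ (Function.update P' w Pw) C').workerOf w)) ∧
    ∀ (f : F) (Cf : Finset W → Finset W), SubChoice Cf →
      (ψ P' C').firmOf f =
        C f ((ψ P' C').firmOf f ∪ (ψ P' (Function.update C' f Cf)).firmOf f)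


section Aux

/-- Rank used by `bump`: target `t` on top (2), then `none` (1), then the rest (0). -/
def bumpKey (t x : Option F) : ℕ := if x = t then 2 else if x = none then 1 else 0

/-- The linear order on `Option F` obtained from `L` by moving `t` to the top and
`none` just below it. -/
def bump (L : LinearOrder (Option F)) (t : Option F) : LinearOrder (Option F) :=
  letI := L
  LinearOrder.lift' (β := ℕ ×ₗ Option F) (fun x => toLex (bumpKey t x, x))
    (fun _ _ h => congrArg (fun p : ℕ ×ₗ Option F => (ofLex p).2) h)

lemma bump_forces {L : LinearOrder (Option F)} {t a : Option F}
    (h : ¬ (bump L t).lt a none) : a = t ∨ a = none := by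
  by_contra hc
  push_neg at hc
  apply h
  show (letI := L; toLex (bumpKey t a, a) < toLex (bumpKey t none, none))
  letI := L
  rw [Prod.Lex.lt_iff]
  left
  have h1 : bumpKey t a = 0 := by unfold bumpKey; simp [hc.1, hc.2]
  have h2 : 1 ≤ bumpKey t none := by unfold bumpKey; split <;> simp
  show bumpKey t a < bumpKey t none
  omega

lemma bump_none_lt {L : LinearOrder (Option F)} {t : Option F} (ht : t ≠ none) :
    (bump L t).lt none t := by
  show (letI := L; toLex (bumpKey t none, none) < toLex (bumpKey t t, t))
  letI := L
  rw [Prod.Lex.lt_iff]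
  left
  have h1 : bumpKey t none = 1 := by unfold bumpKey; simp [Ne.symm ht]
  have h2 : bumpKey t t = 2 := by unfold bumpKey; simp
  show bumpKey t none < bumpKey t t
  omega

lemma Matching.eq_of_workerOf {μ ν : Matching W F}
    (h : ∀ w, μ.workerOf w = ν.workerOf w) : μ = ν := by
  have hw : μ.workerOf = ν.workerOf := funext h
  have hf : μ.firmOf = ν.firmOf := funext fun f => Finset.ext fun w => by
    rw [μ.consistent, ν.consistent, hw]
  cases μ; cases ν; simp_all

end Aux

/-- For every stable rule `ψ` and market `(P, C)` with
substitutable firm choice functions, the game `(ψ, P, C)` implements the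
individually rational correspondence in Nash equilibrium: every Nash
equilibrium outcome is individually rational under `(P, C)`, and every
individually rational matching `μ ∈ I(P,C)` is the outcome `ψ(P*, C*)` of some
Nash equilibrium `(P*, C*)` (with substitutable reported choice functions). -/
theorem stable_rule_implements_indRational
    (P : W → LinearOrder (Option F)) (C : F → Finset W → Finset W)
    (hC : ∀ f, SubChoice (C f))
    (ψ : (W → LinearOrder (Option F)) → (F → Finset W → Finset W) → Matching W F)
    (hψ : ∀ P' C', (∀ f, SubChoice (C' f)) → Stable P' C' (ψ P' C')) :
    (∀ (P' : W → LinearOrder (Option F)) (C' : F → Finset W → Finset W),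
        (∀ f, SubChoice (C' f)) → NashEq P C ψ P' C' →
          IndRational P C (ψ P' C')) ∧
      ∀ μ : Matching W F, IndRational P C μ →
        ∃ (Pstar : W → LinearOrder (Option F)) (Cstar : F → Finset W → Finset W),
          (∀ f, SubChoice (Cstar f)) ∧ NashEq P C ψ Pstar Cstar ∧
            ψ Pstar Cstar = μ := by
  constructor
  · rintro P' C' hC' ⟨hW, hF⟩
    constructor
    · intro w hlt
      have hst := hψ (Function.update P' w (bump (P w) none)) C' hC'
      have hIR := hst.1.1 w
      rw [Function.update_self] at hIR
      have hnone : (ψ (Function.update P' w (bump (P w) none)) C').workerOf w = none := by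
        rcases bump_forces hIR with h | h <;> exact h
      exact hW w (bump (P w) none) (by rw [hnone]; exact hlt)
    · intro f
      have h := hF f (C f) (hC f)
      have hsub := (hC f).2 ((ψ P' C').firmOf f)
        ((ψ P' C').firmOf f ∪ (ψ P' (Function.update C' f (C f))).firmOf f)
        Finset.subset_union_left
      rw [← h] at hsub
      rw [Finset.inter_self] at hsub
      exact Finset.Subset.antisymm ((hC f).1 _) hsub
  · intro μ hμ
    set Pstar : W → LinearOrder (Option F) := fun w => bump (P w) (μ.workerOf w) with hPdef
    set Cstar : F → Finset W → Finset W := fun f S => S ∩ μ.firmOf f with hCdef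
    have hCstar : ∀ f, SubChoice (Cstar f) := by
      intro f
      refine ⟨fun S => Finset.inter_subset_left, fun S' S hsub x hx => ?_⟩
      simp only [hCdef, Finset.mem_inter] at *
      tauto
    have hν := hψ Pstar Cstar hCstar
    have hwof : ∀ w, (ψ Pstar Cstar).workerOf w = μ.workerOf w := by
      intro w
      rcases bump_forces (hν.1.1 w) with h | h
      · exact h
      · by_contra hne
        obtain ⟨f, hf⟩ : ∃ f, μ.workerOf w = some f := by
          cases hmw : μ.workerOf w with
          | none => exact absurd (h.trans hmw.symm) hne
          | some f => exact ⟨f, rfl⟩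
        apply hν.2
        refine ⟨f, w, ?_, ?_, ?_⟩
        · intro hw
          rw [(ψ Pstar Cstar).consistent] at hw
          rw [hw] at h
          simp at h
        · have hwμ : w ∈ μ.firmOf f := (μ.consistent w f).2 hf
          simp [hCdef, hwμ]
        · rw [h]
          show (bump (P w) (μ.workerOf w)).lt none (some f)
          rw [hf]
          exact bump_none_lt (by simp)
    have hA : ψ Pstar Cstar = μ := (Matching.eq_of_workerOf fun w => (hwof w).symm).symm
    refine ⟨Pstar, Cstar, hCstar, ⟨?_, ?_⟩, hA⟩
    · intro w Pw hlt
      have hν' := hψ (Function.update Pstar w Pw) Cstar hCstar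
      set ν' := ψ (Function.update Pstar w Pw) Cstar with hν'def
      have hsubf : ∀ f, ν'.firmOf f ⊆ μ.firmOf f := by
        intro f
        have h := hν'.1.2 f
        simp only [hCdef] at h
        rw [← h]
        exact Finset.inter_subset_right
      have hcases : ν'.workerOf w = μ.workerOf w ∨ ν'.workerOf w = none := by
        cases hc : ν'.workerOf w with
        | none => exact Or.inr rfl
        | some f =>
          left
          have hw1 : w ∈ ν'.firmOf f := (ν'.consistent w f).2 hc
          rw [(μ.consistent w f).1 (hsubf f hw1)]
      rcases hcases with h | h
      · rw [hwof w, h] at hlt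
        letI := P w
        exact lt_irrefl _ hlt
      · rw [hwof w, h] at hlt
        exact hμ.1 w hlt
    · intro f Cf hCf
      have hC'' : ∀ g, SubChoice (Function.update Cstar f Cf g) := by
        intro g
        by_cases hg : g = f
        · subst hg; rw [Function.update_self]; exact hCf
        · rw [Function.update_of_ne hg]; exact hCstar g
      have hν' := hψ Pstar (Function.update Cstar f Cf) hC''
      set ν' := ψ Pstar (Function.update Cstar f Cf) with hν'def
      have hsub : ν'.firmOf f ⊆ μ.firmOf f := by
        intro w hw
        have hc : ν'.workerOf w = some f := (ν'.consistent w f).1 hw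
        rcases bump_forces (hν'.1.1 w) with h | h
        · exact (μ.consistent w f).2 (h ▸ hc)
        · rw [h] at hc; simp at hc
      rw [hA, Finset.union_eq_left.mpr hsub]
      exact (hμ.2 f).symm
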